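/- Let X be a nonempty zero-dimensional T1 space. Then X is ℕ-compact if and only if every countably additive 2-valued c-measure on X is a Dirac c-measure. Here a c-measure on X is a function μ from the clopen subsets of X to [0, ∞) with μ(A ∪ B) = μ(A) + μ(B) whenever A and B are disjoint clopen sets; μ is 2-valued if it takes only the values 0 and 1 and μ(X) = 1; μ is countably additive if μ(⋃_{n∈ℕ} A_n) = Σ_{n∈ℕ} μ(A_n) whenever (A_n)_{n∈ℕ} is a pairwise disjoint sequence of clopen sets whose union is clopen; and μ is the Dirac c-measure determined by a point p ∈ X if for every clopen A ⊆ X one has μ(A) = 1 when p ∈ A and μ(A) = 0 when p ∉ A. -/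

import Mathlib

open Topology TopologicalSpace Set

universe u

/-- `X` is `E`-compact if it is homeomorphic to a closed subspace of a power `E^J`
for some nonempty index set `J`. -/
def IsECompact (E : Type*) (X : Type u)
    [TopologicalSpace E] [TopologicalSpace X] : Prop :=
  ∃ (J : Type u) (_ : Nonempty J) (e : X → J → E),
    IsEmbedding e ∧ IsClosed (Set.range e)

section ECompactHelpers

variable {X : Type u} [TopologicalSpace X]

lemma mu_empty (μ : Set X → ℝ)
    (hadd : ∀ A B : Set X, IsClopen A → IsClopen B → Disjoint A B → μ (A ∪ B) = μ A + μ B) :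
    μ ∅ = 0 := by
  have h := hadd ∅ ∅ isClopen_empty isClopen_empty (by simp)
  simp at h
  linarith

lemma mu_compl (μ : Set X → ℝ)
    (hadd : ∀ A B : Set X, IsClopen A → IsClopen B → Disjoint A B → μ (A ∪ B) = μ A + μ B)
    (huniv : μ Set.univ = 1) {A : Set X} (hA : IsClopen A) : μ Aᶜ = 1 - μ A := by
  have h := hadd A Aᶜ hA hA.compl disjoint_compl_right
  rw [union_compl_self, huniv] at h
  linarith

lemma mu_inter (μ : Set X → ℝ)
    (hadd : ∀ A B : Set X, IsClopen A → IsClopen B → Disjoint A B → μ (A ∪ B) = μ A + μ B)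
    (h01 : ∀ A : Set X, IsClopen A → μ A = 0 ∨ μ A = 1)
    {A B : Set X} (hA : IsClopen A) (hB : IsClopen B) (hA1 : μ A = 1) (hB1 : μ B = 1) :
    μ (A ∩ B) = 1 := by
  have hAB : IsClopen (A ∩ B) := hA.inter hB
  have hAd : IsClopen (A \ B) := hA.diff hB
  have h1 : μ (A ∩ B ∪ A \ B) = μ (A ∩ B) + μ (A \ B) :=
    hadd _ _ hAB hAd (Disjoint.mono_left inter_subset_right disjoint_sdiff_right)
  rw [Set.inter_union_diff] at h1
  have h2 := hadd (A \ B) B hAd hB disjoint_sdiff_left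
  have h3 := h01 _ (hAd.union hB)
  have h4 := h01 _ hAd
  rcases h3 with h3 | h3 <;> rcases h4 with h4 | h4 <;> linarith

lemma mu_one_nonempty (μ : Set X → ℝ)
    (hadd : ∀ A B : Set X, IsClopen A → IsClopen B → Disjoint A B → μ (A ∪ B) = μ A + μ B)
    {A : Set X} (h1 : μ A = 1) : A.Nonempty := by
  rcases A.eq_empty_or_nonempty with rfl | h
  · have := mu_empty μ hadd; norm_num [this] at h1
  · exact h


lemma fwd {J : Type u} (e : X → J → ℕ) (he : IsEmbedding e) (hcl : IsClosed (Set.range e))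
    (μ : Set X → ℝ)
    (hadd : ∀ A B : Set X, IsClopen A → IsClopen B → Disjoint A B → μ (A ∪ B) = μ A + μ B)
    (h01 : ∀ A : Set X, IsClopen A → μ A = 0 ∨ μ A = 1)
    (huniv : μ Set.univ = 1)
    (hcnt : ∀ A : ℕ → Set X, (∀ n, IsClopen (A n)) →
        (∀ m n, m ≠ n → Disjoint (A m) (A n)) → IsClopen (⋃ n, A n) →
        HasSum (fun n => μ (A n)) (μ (⋃ n, A n)))
    (mu_inter : ∀ {A B : Set X}, IsClopen A → IsClopen B → μ A = 1 → μ B = 1 → μ (A ∩ B) = 1)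
    (mu_compl : ∀ {A : Set X}, IsClopen A → μ Aᶜ = 1 - μ A)
    (mu_ne : ∀ {A : Set X}, μ A = 1 → A.Nonempty) :
    ∃ p : X, ∀ A : Set X, IsClopen A → (p ∈ A → μ A = 1) ∧ (p ∉ A → μ A = 0) := by
  classical
  set S : J → ℕ → Set X := fun j n => (fun x => e x j) ⁻¹' {n} with hS
  have hScl : ∀ j n, IsClopen (S j n) := fun j n =>
    (isClopen_discrete {n}).preimage ((continuous_apply j).comp he.continuous)
  have hSdisj : ∀ j, ∀ m n, m ≠ n → Disjoint (S j m) (S j n) := by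
    intro j m n hmn
    simp only [Set.disjoint_left, hS]
    intro x hx hx'
    simp only [mem_preimage, mem_singleton_iff] at hx hx'
    exact hmn (hx ▸ hx')
  have hSun : ∀ j, (⋃ n, S j n) = Set.univ := by
    intro j; ext x; simp [hS]
  have hSsum : ∀ j, HasSum (fun n => μ (S j n)) 1 := by
    intro j
    have := hcnt (S j) (hScl j) (hSdisj j) (by rw [hSun j]; exact isClopen_univ)
    rwa [hSun j, huniv] at this
  -- choose f
  have hex : ∀ j, ∃ n, μ (S j n) = 1 := by
    intro j
    by_contra hc
    push_neg at hc
    have hz : ∀ n, μ (S j n) = 0 := fun n => (h01 _ (hScl j n)).resolve_right (hc n)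
    have : HasSum (fun n => μ (S j n)) 0 := by
      simpa [hz] using (hasSum_zero : HasSum (fun _ : ℕ => (0:ℝ)) 0)
    exact (one_ne_zero : (1:ℝ) ≠ 0) ((hSsum j).unique this)
  choose f hf using hex
  -- finite intersections
  have hfin : ∀ I : Finset J, IsClopen (⋂ i ∈ I, S i (f i)) ∧ μ (⋂ i ∈ I, S i (f i)) = 1 := by
    intro I
    induction I using Finset.induction_on with
    | empty => constructor <;> simp [huniv, isClopen_univ]
    | insert a I' hnm ih =>
      rw [Finset.set_biInter_insert]
      exact ⟨(hScl a (f a)).inter ih.1, mu_inter (hScl a (f a)) ih.1 (hf a) ih.2⟩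
  -- f ∈ closure (range e)
  have hmem : f ∈ closure (Set.range e) := by
    rw [mem_closure_iff]
    intro o ho hfo
    obtain ⟨I, u, hu, hsub⟩ := isOpen_pi_iff.mp ho f hfo
    obtain ⟨x, hx⟩ := mu_ne (hfin I).2
    refine ⟨e x, hsub fun i hi => ?_, mem_range_self x⟩
    have : x ∈ S i (f i) := by
      simp only [Set.mem_iInter] at hx
      exact hx i hi
    simp only [hS, mem_preimage, mem_singleton_iff] at this
    rw [this]
    exact (hu i hi).2
  rw [hcl.closure_eq] at hmem
  obtain ⟨p, hp⟩ := hmem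
  -- key claim
  have key : ∀ B : Set X, IsClopen B → μ B = 1 → p ∈ B := by
    intro B hB hB1
    by_contra hpB
    have hceb : IsClosed (e '' B) := (IsClosedEmbedding.mk he hcl).isClosedMap B hB.isClosed
    have hfnot : f ∈ (e '' B)ᶜ := by
      rw [← hp]
      intro ⟨x, hxB, hxe⟩
      exact hpB (he.injective hxe ▸ hxB)
    obtain ⟨I, u, hu, hsub⟩ := isOpen_pi_iff.mp hceb.isOpen_compl f hfnot
    have h1 : μ (B ∩ ⋂ i ∈ I, S i (f i)) = 1 := mu_inter hB (hfin I).1 hB1 (hfin I).2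
    obtain ⟨x, hxB, hx⟩ := mu_ne h1
    have : e x ∈ (I : Set J).pi u := by
      intro i hi
      have : x ∈ S i (f i) := by
        simp only [Set.mem_iInter] at hx
        exact hx i hi
      simp only [hS, mem_preimage, mem_singleton_iff] at this
      rw [this]
      exact (hu i hi).2
    exact hsub this ⟨x, hxB, rfl⟩
  refine ⟨p, fun A hA => ⟨fun hpA => ?_, fun hpA => ?_⟩⟩
  · rcases h01 A hA with h | h
    · have hc1 : μ Aᶜ = 1 := by rw [mu_compl hA, h]; ring
      exact absurd (key Aᶜ hA.compl hc1) (by simp [hpA])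
    · exact h
  · rcases h01 A hA with h | h
    · exact h
    · exact absurd (key A hA h) hpA


open Classical in
noncomputable def chi (A : Set X) : X → ℕ := fun x => if x ∈ A then 1 else 0

lemma chi_cont {A : Set X} (hA : IsClopen A) : Continuous (chi A) := by
  rw [continuous_discrete_rng]
  intro b
  rcases eq_or_ne b 1 with rfl | rb
  · convert hA.isOpen using 1
    ext x; by_cases hx : x ∈ A <;> simp [chi, hx]
  rcases eq_or_ne b 0 with rfl | r0
  · convert hA.compl.isOpen using 1
    ext x; by_cases hx : x ∈ A <;> simp [chi, hx]
  · convert isOpen_empty (X := X) using 1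
    ext x; by_cases hx : x ∈ A <;> simp [chi, hx, rb.symm, r0.symm]

lemma bwd [Nonempty X] [T1Space X] (hzd : IsTopologicalBasis {s : Set X | IsClopen s})
    (H : ∀ μ : Set X → ℝ,
      (∀ A B : Set X, IsClopen A → IsClopen B → Disjoint A B →
        μ (A ∪ B) = μ A + μ B) →
      (∀ A : Set X, IsClopen A → μ A = 0 ∨ μ A = 1) →
      μ Set.univ = 1 →
      (∀ A : ℕ → Set X, (∀ n, IsClopen (A n)) →
        (∀ m n, m ≠ n → Disjoint (A m) (A n)) → IsClopen (⋃ n, A n) →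
        HasSum (fun n => μ (A n)) (μ (⋃ n, A n))) →
      ∃ p : X, ∀ A : Set X, IsClopen A →
        (p ∈ A → μ A = 1) ∧ (p ∉ A → μ A = 0)) :
    ∃ (J : Type u) (_ : Nonempty J) (e : X → J → ℕ),
      IsEmbedding e ∧ IsClosed (Set.range e) := by
  classical
  set J : Type u := {j : X → ℕ // Continuous j} with hJ
  refine ⟨J, ⟨⟨fun _ => 0, continuous_const⟩⟩, fun x j => j.1 x, ?_, ?_⟩
  · -- embedding
    have hcont : Continuous (fun x (j : J) => j.1 x) := continuous_pi fun j => j.2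
    have hind : IsInducing (fun x (j : J) => j.1 x) := by
      rw [isInducing_iff_nhds]
      intro x
      refine le_antisymm ((hcont.tendsto x).le_comap) ?_
      intro U hU
      obtain ⟨A, hAcl, hxA, hAU⟩ := hzd.mem_nhds_iff.mp hU
      refine Filter.mem_of_superset ?_ hAU
      have hV : IsOpen {g : J → ℕ | g ⟨chi A, chi_cont hAcl⟩ = 1} :=
        (isOpen_discrete {1}).preimage (continuous_apply _)
      have hxV : (fun j : J => j.1 x) ∈ {g : J → ℕ | g ⟨chi A, chi_cont hAcl⟩ = 1} := by
        simp [chi, hxA]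
      have : (fun (y:X) (j:J) => j.1 y) ⁻¹' {g : J → ℕ | g ⟨chi A, chi_cont hAcl⟩ = 1} ∈ Filter.comap (fun (y:X) (j:J) => j.1 y) (𝓝 (fun j : J => j.1 x)) := Filter.preimage_mem_comap (hV.mem_nhds hxV)
      refine Filter.mem_of_superset this ?_
      intro y hy
      simp only [mem_preimage, mem_setOf_eq, chi] at hy
      by_contra hyA
      simp [hyA] at hy
    refine ⟨hind, fun x y hxy => ?_⟩
    by_contra hne
    obtain ⟨A, hAcl, hxA, hAy⟩ := hzd.mem_nhds_iff.mp
      ((isOpen_compl_singleton (x := y)).mem_nhds (by simpa using hne))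
    have := congrFun hxy ⟨chi A, chi_cont hAcl⟩
    have hyA : y ∉ A := fun h => hAy h rfl
    simp [chi, hxA, hyA] at this
  · -- closed range
    set e : X → J → ℕ := fun x j => j.1 x with he
    refine isClosed_of_closure_subset ?_
    intro f hfcl
    -- transfer principle
    have key : ∀ s : Set (J → ℕ), IsClosed s → (∀ x, e x ∈ s) → f ∈ s := fun s hs hx =>
      closure_minimal (range_subset_iff.mpr hx) hs hfcl
    -- two-valuedness of coordinates corresponding to clopen indicators handled below.
    set μ : Set X → ℝ := fun A => if h : IsClopen A then (f ⟨chi A, chi_cont h⟩ : ℝ) else 0 with hμ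
    have hval : ∀ (A : Set X) (h : IsClopen A), μ A = (f ⟨chi A, chi_cont h⟩ : ℝ) := by
      intro A h; simp [hμ, h]
    have hadd : ∀ A B : Set X, IsClopen A → IsClopen B → Disjoint A B →
        μ (A ∪ B) = μ A + μ B := by
      intro A B hA hB hAB
      rw [hval _ (hA.union hB), hval _ hA, hval _ hB]
      have : f ∈ {g : J → ℕ | g ⟨chi (A ∪ B), chi_cont (hA.union hB)⟩ =
          g ⟨chi A, chi_cont hA⟩ + g ⟨chi B, chi_cont hB⟩} := by
        apply key
        · exact isClosed_eq (continuous_apply _)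
            ((continuous_apply (⟨chi A, chi_cont hA⟩ : J)).add (continuous_apply (⟨chi B, chi_cont hB⟩ : J)))
        · intro x
          simp only [mem_setOf_eq, he, chi]
          by_cases hx : x ∈ A
          · have hxB : x ∉ B := fun h => (Set.disjoint_left.mp hAB hx) h
            simp [hx, hxB]
          · by_cases hxB : x ∈ B <;> simp [hx, hxB]
      simp only [mem_setOf_eq] at this
      rw [this]
      push_cast
      ring
    have h01 : ∀ A : Set X, IsClopen A → μ A = 0 ∨ μ A = 1 := by
      intro A hA
      rw [hval _ hA]
      have : f ∈ {g : J → ℕ | g ⟨chi A, chi_cont hA⟩ = 0 ∨ g ⟨chi A, chi_cont hA⟩ = 1} := by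
        apply key
        · have : {g : J → ℕ | g ⟨chi A, chi_cont hA⟩ = 0 ∨ g ⟨chi A, chi_cont hA⟩ = 1} =
              (fun g : J → ℕ => g ⟨chi A, chi_cont hA⟩) ⁻¹' {0, 1} := by
            ext g; simp [mem_preimage]
          rw [this]
          exact (isClopen_discrete ({0, 1} : Set ℕ)).isClosed.preimage (continuous_apply _)
        · intro x
          simp only [mem_setOf_eq, he, chi]
          by_cases hx : x ∈ A <;> simp [hx]
      rcases this with h | h <;> simp [h]
    have huniv : μ Set.univ = 1 := by
      rw [hval _ isClopen_univ]
      have : f ∈ {g : J → ℕ | g ⟨chi Set.univ, chi_cont isClopen_univ⟩ = 1} := by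
        apply key
        · exact isClosed_eq (continuous_apply _) continuous_const
        · intro x; simp [he, chi]
      simp only [mem_setOf_eq] at this
      rw [this]; norm_num
    have hcnt : ∀ A : ℕ → Set X, (∀ n, IsClopen (A n)) →
        (∀ m n, m ≠ n → Disjoint (A m) (A n)) → IsClopen (⋃ n, A n) →
        HasSum (fun n => μ (A n)) (μ (⋃ n, A n)) := by
      intro A hAcl hdisj hUcl
      set U := ⋃ n, A n with hUdef
      set hfun : X → ℕ := fun x => if hx : ∃ n, x ∈ A n then Nat.find hx + 1 else 0 with hh
      have hiff : ∀ (x : X) (n : ℕ), hfun x = n + 1 ↔ x ∈ A n := by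
        intro x n
        constructor
        · intro hx
          by_cases hex : ∃ m, x ∈ A m
          · have h2 : hfun x = Nat.find hex + 1 := dif_pos hex
            have h3 : Nat.find hex = n := by omega
            rw [← h3]; exact Nat.find_spec hex
          · have h2 : hfun x = 0 := dif_neg hex
            omega
        · intro hx
          have hex : ∃ m, x ∈ A m := ⟨n, hx⟩
          have h2 : hfun x = Nat.find hex + 1 := dif_pos hex
          have h3 : Nat.find hex = n := by
            by_contra hne
            exact Set.disjoint_left.mp (hdisj _ _ hne) (Nat.find_spec hex) hx
          omega
      have hiff0 : ∀ x : X, hfun x = 0 ↔ x ∉ U := by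
        intro x
        constructor
        · intro hx hxU
          rw [hUdef, mem_iUnion] at hxU
          obtain ⟨m, hm⟩ := hxU
          have h2 : hfun x = Nat.find (⟨m, hm⟩ : ∃ k, x ∈ A k) + 1 := dif_pos _
          omega
        · intro hxU
          have hex : ¬ ∃ m, x ∈ A m := by simpa [hUdef, mem_iUnion] using hxU
          exact dif_neg hex
      have hconth : Continuous hfun := by
        rw [continuous_discrete_rng]
        intro b
        cases b with
        | zero =>
          have : hfun ⁻¹' {0} = Uᶜ := by ext x; simp [hiff0 x]
          rw [this]; exact hUcl.compl.isOpen
        | succ n =>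
          have : hfun ⁻¹' {n+1} = A n := by ext x; simp [hiff x n]
          rw [this]; exact (hAcl n).isOpen
      set jh : J := ⟨hfun, hconth⟩ with hjh
      have hrel : ∀ n, f ⟨chi (A n), chi_cont (hAcl n)⟩ = if f jh = n + 1 then 1 else 0 := by
        intro n
        have : f ∈ {g : J → ℕ | g ⟨chi (A n), chi_cont (hAcl n)⟩ =
            if g jh = n + 1 then 1 else 0} := by
          apply key
          · exact isClosed_eq (continuous_apply _)
              ((continuous_of_discreteTopology
                (f := fun k : ℕ => if k = n + 1 then (1:ℕ) else 0)).comp (continuous_apply jh))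
          · intro x
            simp only [mem_setOf_eq, he, chi]
            by_cases hx : x ∈ A n
            · rw [if_pos hx, if_pos ((hiff x n).mpr hx)]
            · rw [if_neg hx, if_neg (fun h => hx ((hiff x n).mp h))]
        exact this
      have hrelU : f ⟨chi U, chi_cont hUcl⟩ = if f jh = 0 then 0 else 1 := by
        have : f ∈ {g : J → ℕ | g ⟨chi U, chi_cont hUcl⟩ = if g jh = 0 then 0 else 1} := by
          apply key
          · exact isClosed_eq (continuous_apply _)
              ((continuous_of_discreteTopology
                (f := fun k : ℕ => if k = 0 then (0:ℕ) else 1)).comp (continuous_apply jh))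
          · intro x
            simp only [mem_setOf_eq, he, chi]
            by_cases hx : x ∈ U
            · rw [if_pos hx, if_neg (fun h => (hiff0 x).mp h hx)]
            · rw [if_neg hx, if_pos ((hiff0 x).mpr hx)]
        exact this
      cases hfj : f jh with
      | zero =>
        have hμU : μ U = 0 := by
          rw [hval _ hUcl, hrelU, if_pos hfj]; norm_num
        have hz : (fun n => μ (A n)) = fun _ => (0:ℝ) := by
          funext n
          rw [hval _ (hAcl n), hrel n, hfj, if_neg (by omega)]
          norm_num
        rw [hμU, hz]
        exact hasSum_zero
      | succ m =>
        have hμU : μ U = 1 := by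
          rw [hval _ hUcl, hrelU, if_neg (by omega)]; norm_num
        have hz : (fun n => μ (A n)) = fun n => if n = m then (1:ℝ) else 0 := by
          funext n
          rw [hval _ (hAcl n), hrel n, hfj]
          by_cases hnm : n = m
          · rw [if_pos (by omega), if_pos hnm]; norm_num
          · rw [if_neg (by omega), if_neg hnm]; norm_num
        rw [hμU, hz]
        exact hasSum_ite_eq m 1
    obtain ⟨p, hp⟩ := H μ hadd h01 huniv hcnt
    refine ⟨p, ?_⟩
    funext j
    obtain ⟨j0, hj0⟩ := j
    set n := j0 p with hn
    have hAcl : IsClopen (j0 ⁻¹' {n}) := (isClopen_discrete {n}).preimage hj0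
    have hμA : μ (j0 ⁻¹' {n}) = 1 := (hp _ hAcl).1 rfl
    have hfA : f ⟨chi (j0 ⁻¹' {n}), chi_cont hAcl⟩ = 1 := by
      rw [hval _ hAcl] at hμA
      exact_mod_cast hμA
    have hrel : f ⟨chi (j0 ⁻¹' {n}), chi_cont hAcl⟩ =
        if f ⟨j0, hj0⟩ = n then 1 else 0 := by
      have : f ∈ {g : J → ℕ | g ⟨chi (j0 ⁻¹' {n}), chi_cont hAcl⟩ =
          if g ⟨j0, hj0⟩ = n then 1 else 0} := by
        apply key
        · exact isClosed_eq (continuous_apply _)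
            ((continuous_of_discreteTopology
              (f := fun k : ℕ => if k = n then (1:ℕ) else 0)).comp (continuous_apply _))
        · intro x
          simp only [mem_setOf_eq, he, chi, mem_preimage, mem_singleton_iff]
      exact this
    rw [hrel] at hfA
    by_cases hfn : f ⟨j0, hj0⟩ = n
    · exact hfn.symm
    · rw [if_neg hfn] at hfA; omega

end ECompactHelpers

/-- A nonempty zero-dimensional `T₁` space `X` is `ℕ`-compact if and only if every
countably additive 2-valued c-measure on `X` is a Dirac c-measure: for every
function `μ` on subsets of `X` which, on clopen sets, is finitely additive, takes
only the values `0` and `1` with `μ X = 1`, and is countably additive on pairwise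
disjoint sequences of clopen sets with clopen union, there exists a point `p ∈ X`
such that for every clopen `A`, `μ A = 1` when `p ∈ A` and `μ A = 0` when
`p ∉ A`. -/
theorem stmt16 {X : Type u} [TopologicalSpace X] [Nonempty X] [T1Space X]
    (hzd : IsTopologicalBasis {s : Set X | IsClopen s}) :
    IsECompact ℕ X ↔
    ∀ μ : Set X → ℝ,
      (∀ A B : Set X, IsClopen A → IsClopen B → Disjoint A B →
        μ (A ∪ B) = μ A + μ B) →
      (∀ A : Set X, IsClopen A → μ A = 0 ∨ μ A = 1) →
      μ Set.univ = 1 →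
      (∀ A : ℕ → Set X, (∀ n, IsClopen (A n)) →
        (∀ m n, m ≠ n → Disjoint (A m) (A n)) → IsClopen (⋃ n, A n) →
        HasSum (fun n => μ (A n)) (μ (⋃ n, A n))) →
      ∃ p : X, ∀ A : Set X, IsClopen A →
        (p ∈ A → μ A = 1) ∧ (p ∉ A → μ A = 0) := by
  constructor
  · intro h μ hadd h01 huniv hcnt
    obtain ⟨J, _, e, he, hcl⟩ := h
    exact fwd e he hcl μ hadd h01 huniv hcnt
      (fun hA hB hA1 hB1 => mu_inter μ hadd h01 hA hB hA1 hB1)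
      (fun hA => mu_compl μ hadd huniv hA)
      (fun h1 => mu_one_nonempty μ hadd h1)
  · exact fun H => bwd hzd H
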